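/- Let (X,d) be a locally compact metric space and suppose there exists a sequence (e_n) in C₀(X) of compactly supported functions with 0 ≤ e_n ≤ 1, Lipschitz constant L(e_n) → 0, and (e_n) an approximate unit for C₀(X) (i.e. e_n f → f uniformly for all f ∈ C₀(X)). Then (X,d) is proper, i.e. all closed balls are compact. -/

import Mathlib

open Filter Topology
open scoped NNReal

/-- if a locally compact metric space admits an approximate unit of compactly
supported `[0,1]`-valued functions with Lipschitz constants tending to 0, it is proper. -/
theorem stmt17 {X : Type*} [MetricSpace X] [LocallyCompactSpace X]
    (e : ℕ → X → ℝ) (K : ℕ → ℝ≥0)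
    (hcont : ∀ n, Continuous (e n))
    (hsupp : ∀ n, HasCompactSupport (e n))
    (hrange : ∀ n x, e n x ∈ Set.Icc (0 : ℝ) 1)
    (hlip : ∀ n, LipschitzWith (K n) (e n))
    (hK : Tendsto (fun n => (K n : ℝ)) atTop (𝓝 0))
    (happrox : ∀ f : X → ℝ, Continuous f → Tendsto f (cocompact X) (𝓝 0) →
      TendstoUniformly (fun n x => e n x * f x) f atTop) :
    ProperSpace X := by
  refine ProperSpace.of_isCompact_closedBall_of_le 0 fun x r hr => ?_
  -- build a bump function f with f x = 1, compact support
  obtain ⟨k, hk, hkmem⟩ := exists_compact_mem_nhds x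
  obtain ⟨s, hs, hsub⟩ := Metric.nhds_basis_closedBall.mem_iff.1 hkmem
  have hscomp : IsCompact (Metric.closedBall x s) :=
    hk.of_isClosed_subset Metric.isClosed_closedBall hsub
  obtain ⟨f, hfx, hf01, hfsupp, hfcont⟩ :
      ∃ f : X → ℝ, f x = 1 ∧ (∀ y, f y ∈ Set.Icc (0:ℝ) 1) ∧ HasCompactSupport f
        ∧ Continuous f := by
    refine ⟨fun y => max 0 (1 - dist y x / s), by simp [hs.ne'], fun y => ?_, ?_, ?_⟩
    · constructor
      · exact le_max_left _ _
      · refine max_le (by norm_num) ?_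
        have : 0 ≤ dist y x / s := div_nonneg dist_nonneg hs.le
        linarith
    · refine HasCompactSupport.of_support_subset_isCompact hscomp fun y hy => ?_
      rw [Function.mem_support] at hy
      rw [Metric.mem_closedBall]
      by_contra h
      push_neg at h
      have : (1:ℝ) ≤ dist y x / s := (one_le_div hs).2 h.le
      simp only [max_eq_left (by linarith : 1 - dist y x / s ≤ 0)] at hy
      exact hy rfl
    · exact continuous_const.max (by continuity)
  have hf0 := hfsupp.is_zero_at_infty
  have := happrox f hfcont hf0
  rw [Metric.tendstoUniformly_iff] at this
  -- at the point x : e n x * 1 → 1, so eventually e n x > 2/3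
  have h1 : ∀ᶠ n in atTop, (2:ℝ)/3 < e n x := by
    filter_upwards [this (1/3) (by norm_num)] with n hn
    have := hn x
    rw [hfx, mul_one] at this
    have := abs_lt.1 (by simpa [abs_sub_comm, Real.dist_eq] using this)
    linarith [this.2]
  have h2 : ∀ᶠ n in atTop, (K n : ℝ) * r < 1/3 := by
    have : Tendsto (fun n => (K n : ℝ) * r) atTop (𝓝 (0 * r)) := hK.mul_const r
    rw [zero_mul] at this
    exact this.eventually (eventually_lt_nhds (by norm_num))
  obtain ⟨n, hn1, hn2⟩ := (h1.and h2).exists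
  refine (hsupp n).isCompact.of_isClosed_subset Metric.isClosed_closedBall fun y hy => ?_
  have hd : dist (e n x) (e n y) ≤ (K n : ℝ) * r := by
    calc dist (e n x) (e n y) ≤ (K n : ℝ) * dist x y := (hlip n).dist_le_mul x y
    _ ≤ (K n : ℝ) * r := by
          have := Metric.mem_closedBall.1 hy
          rw [dist_comm] at this
          exact mul_le_mul_of_nonneg_left this (K n).coe_nonneg
  have hey : (1:ℝ)/3 < e n y := by
    rw [Real.dist_eq] at hd
    have h := (abs_le.1 hd).2
    linarith
  exact subset_tsupport _ (by simp only [Function.mem_support]; positivity)
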